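/- Along any differentiable solution of the Euler–Poisson equations of the toy top (i.e. curves ω, r with m′ = ω×m + DL and r′ = ω×r), the quantity l := ⟨m, k⟩ is a first integral: its time derivative vanishes identically, so l is constant. -/

import Mathlib

open scoped RealInnerProductSpace

/-- Cross product on `EuclideanSpace ℝ (Fin 3)`. -/
noncomputable def cross3 (x y : EuclideanSpace ℝ (Fin 3)) : EuclideanSpace ℝ (Fin 3) :=
  WithLp.toLp 2 (![x 1 * y 2 - x 2 * y 1, x 2 * y 0 - x 0 * y 2, x 0 * y 1 - x 1 * y 0] : Fin 3 → ℝ)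

/-- The vertical unit vector `k = (0,0,1)`. -/
noncomputable def kvec : EuclideanSpace ℝ (Fin 3) := WithLp.toLp 2 (![0, 0, 1] : Fin 3 → ℝ)

/-- Along any solution of the Euler–Poisson equations of the toy top, the quantity
`l = ⟨m, k⟩` is a first integral: its derivative vanishes identically, hence it is constant. -/
theorem toyTop_l_first_integral
    (A C p s : ℝ) (hA : 0 < A) (hC : 0 < C) (hp : 0 < p) (hs : 0 < s)
    (ω r : ℝ → EuclideanSpace ℝ (Fin 3))
    (hω : Differentiable ℝ ω) (hr : Differentiable ℝ r)
    (hrnorm : ∀ t, ‖r t‖ = 1)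
    (m DL : ℝ → EuclideanSpace ℝ (Fin 3))
    (hm : ∀ t, m t = A • ω t + ((C - A) * ⟪ω t, r t⟫) • r t
        + (p * s * ⟪cross3 (r t) kvec, ω t⟫) • cross3 (r t) kvec)
    (hDL : ∀ t, DL t = ((C - A) * ⟪ω t, r t⟫) • cross3 (r t) (ω t)
        + (p * s * ⟪cross3 (r t) kvec, ω t⟫) • cross3 (r t) (cross3 kvec (ω t))
        + p • cross3 (r t) kvec)
    (hmdiff : Differentiable ℝ m)
    (heqm : ∀ t, deriv m t = cross3 (ω t) (m t) + DL t)
    (heqr : ∀ t, deriv r t = cross3 (ω t) (r t)) :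
    (∀ t, deriv (fun t => ⟪m t, kvec⟫) t = 0) ∧
      ∀ t₁ t₂, ⟪m t₁, kvec⟫ = ⟪m t₂, kvec⟫ := by
  have key : ∀ t, deriv (fun t => ⟪m t, kvec⟫) t = 0 := by
    intro t
    have hd : HasDerivAt (fun t => ⟪m t, kvec⟫) (⟪m t, (0 : EuclideanSpace ℝ (Fin 3))⟫ + ⟪deriv m t, kvec⟫) t :=
      ((hmdiff t).hasDerivAt).inner ℝ (hasDerivAt_const t kvec)
    rw [hd.deriv, inner_zero_right, zero_add, heqm t, hm t, hDL t]
    simp only [cross3, kvec, PiLp.inner_apply, PiLp.add_apply, PiLp.smul_apply,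
      Fin.sum_univ_three, Matrix.cons_val_zero, Matrix.cons_val_one, Matrix.head_cons,
      Matrix.cons_val_two, Matrix.tail_cons, RCLike.inner_apply, conj_trivial,
      smul_eq_mul]
    ring
  refine ⟨key, fun t₁ t₂ => ?_⟩
  have : ∀ t, HasDerivAt (fun t => ⟪m t, kvec⟫) 0 t := by
    intro t
    have hd : HasDerivAt (fun t => ⟪m t, kvec⟫) (⟪m t, (0 : EuclideanSpace ℝ (Fin 3))⟫ + ⟪deriv m t, kvec⟫) t :=
      ((hmdiff t).hasDerivAt).inner ℝ (hasDerivAt_const t kvec)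
    have h2 := hd.deriv
    rw [key t] at h2
    rw [← h2] at hd
    exact hd
  have hconst := is_const_of_deriv_eq_zero (f := fun t => ⟪m t, kvec⟫)
    (fun t => (this t).differentiableAt) (fun t => (this t).deriv.symm ▸ key t) t₁ t₂
  exact hconst
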